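/- Let p ≥ 2, d, n ∈ ℕ, and let X₁,…,X_n be i.i.d. ℝ^d-valued random variables with E‖X₁‖ < ∞. Then (E[‖E[X₁] − (1/n)Σ_{i=1}^n X_i‖^p])^{1/p} ≤ 2·((p−1)/n)^{1/2} · (E[‖X₁ − E[X₁]‖^p])^{1/p}. -/

import Mathlib

open MeasureTheory ProbabilityTheory
open Set
open scoped ENNReal NNReal

open MeasureTheory ProbabilityTheory Set
open scoped ENNReal NNReal

lemma mc_aux_rpow_sub_one {x β : ℝ} (hx : 0 ≤ x) (hβ : 1 ≤ β) :
    x ^ β = x ^ (β - 1) * x := by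
  rcases eq_or_lt_of_le hx with h | h
  · rw [← h]
    rw [Real.zero_rpow (by linarith), mul_zero]
  · rw [← Real.rpow_add_one (ne_of_gt h) (β - 1)]
    ring_nf

/-- Key elementary inequality (E). -/
lemma mc_scalarE {β t : ℝ} (hβ : 1 ≤ β) (ht0 : 0 ≤ t) (ht1 : t ≤ 1) :
    (1 + t) ^ β * (1 - β * t) ≤ (1 - t) ^ β * (1 + β * t) := by
  set h : ℝ → ℝ := fun t => (1 - t) ^ β * (1 + β * t) - (1 + t) ^ β * (1 - β * t) with hh
  have hder : ∀ s : ℝ, HasDerivAt h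
      ((β * (1 - s) ^ (β - 1) * (-1)) * (1 + β * s) + (1 - s) ^ β * β
        - ((β * (1 + s) ^ (β - 1)) * (1 - β * s) + (1 + s) ^ β * (-β))) s := by
    intro s
    have h1 : HasDerivAt (fun t : ℝ => 1 - t) (-1) s := by
      simpa using (hasDerivAt_id s).const_sub 1
    have h2 : HasDerivAt (fun t : ℝ => 1 + t) 1 s := by
      simpa using (hasDerivAt_id s).const_add 1
    have h1' : HasDerivAt (fun t : ℝ => (1 - t) ^ β) (β * (1 - s) ^ (β - 1) * (-1)) s := by
      have := (Real.hasDerivAt_rpow_const (x := 1 - s) (p := β) (Or.inr hβ)).comp s h1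
      simpa [mul_comm, mul_assoc, Function.comp_def] using this
    have h2' : HasDerivAt (fun t : ℝ => (1 + t) ^ β) (β * (1 + s) ^ (β - 1)) s := by
      have := (Real.hasDerivAt_rpow_const (x := 1 + s) (p := β) (Or.inr hβ)).comp s h2
      simpa [Function.comp_def] using this
    have h3 : HasDerivAt (fun t : ℝ => 1 + β * t) β s := by
      simpa using ((hasDerivAt_id s).const_mul β).const_add 1
    have h4 : HasDerivAt (fun t : ℝ => 1 - β * t) (-β) s := by
      simpa using ((hasDerivAt_id s).const_mul β).const_sub 1
    exact (h1'.mul h3).sub (h2'.mul h4)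
  have hmono : MonotoneOn h (Icc 0 1) := by
    apply monotoneOn_of_deriv_nonneg (convex_Icc 0 1)
    · exact fun s _ => ((hder s).continuousAt).continuousWithinAt
    · intro s hs
      exact ((hder s).differentiableAt).differentiableWithinAt
    · intro s hs
      rw [interior_Icc] at hs
      rw [(hder s).deriv]
      have hs0 : 0 < s := hs.1
      have hs1 : s < 1 := hs.2
      have e1 : (1 - s) ^ β = (1 - s) ^ (β - 1) * (1 - s) :=
        mc_aux_rpow_sub_one (by linarith) hβ
      have e2 : (1 + s) ^ β = (1 + s) ^ (β - 1) * (1 + s) :=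
        mc_aux_rpow_sub_one (by linarith) hβ
      rw [e1, e2]
      have hA : (1 - s) ^ (β - 1) ≤ 1 := by
        calc (1 - s) ^ (β - 1) ≤ 1 ^ (β - 1) :=
              Real.rpow_le_rpow (by linarith) (by linarith) (by linarith)
        _ = 1 := Real.one_rpow _
      have hB : 1 ≤ (1 + s) ^ (β - 1) := by
        calc (1 : ℝ) = 1 ^ (β - 1) := (Real.one_rpow _).symm
        _ ≤ (1 + s) ^ (β - 1) := Real.rpow_le_rpow (by norm_num) (by linarith) (by linarith)
      nlinarith [mul_nonneg hs0.le (sub_nonneg.mpr (hA.trans hB)),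
        mul_nonneg (mul_nonneg (by linarith : (0:ℝ) ≤ β) hs0.le)
          (sub_nonneg.mpr (hA.trans hB))]
  have h0 : h 0 = 0 := by simp [hh]
  have := hmono (by simp : (0:ℝ) ∈ Icc 0 1) (⟨ht0, ht1⟩ : t ∈ Icc 0 1) ht0
  rw [h0] at this
  simpa [hh, sub_nonneg] using this

/-- Main scalar two-point inequality on `[0,1]`. -/
lemma mc_scalarMain {p t : ℝ} (hp : 2 ≤ p) (ht0 : 0 ≤ t) (ht1 : t ≤ 1) :
    (1 + t) ^ p + (1 - t) ^ p ≤ 2 * (1 + (p - 1) * t ^ 2) ^ (p / 2) := by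
  have hp1 : (1:ℝ) ≤ p - 1 := by linarith
  have hp0 : (0:ℝ) < p := by linarith
  set β : ℝ := p - 1 with hβdef
  -- positivity facts on [0,1]
  have hu : ∀ s : ℝ, 0 ≤ s → (0:ℝ) < 1 + β * s ^ 2 := by
    intro s hs; nlinarith
  have hSigpos : ∀ s : ℝ, 0 ≤ s → s ≤ 1 → (0:ℝ) < (1 + s) ^ p + (1 - s) ^ p := by
    intro s hs0 hs1
    have : (0:ℝ) < (1 + s) ^ p := Real.rpow_pos_of_pos (by linarith) p
    have h2 : (0:ℝ) ≤ (1 - s) ^ p := Real.rpow_nonneg (by linarith) p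
    linarith
  set Φ : ℝ → ℝ := fun t =>
    p / 2 * Real.log (1 + β * t ^ 2) + Real.log 2 - Real.log ((1 + t) ^ p + (1 - t) ^ p)
    with hΦdef
  have hder : ∀ s : ℝ, 0 ≤ s → s ≤ 1 → HasDerivAt Φ
      (p / 2 * (β * (2 * s) / (1 + β * s ^ 2)) -
        (p * (1 + s) ^ (p - 1) + p * (1 - s) ^ (p - 1) * (-1)) /
          ((1 + s) ^ p + (1 - s) ^ p)) s := by
    intro s hs0 hs1
    have h2 : HasDerivAt (fun t : ℝ => 1 + t) 1 s := by
      simpa using (hasDerivAt_id s).const_add 1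
    have h1 : HasDerivAt (fun t : ℝ => 1 - t) (-1) s := by
      simpa using (hasDerivAt_id s).const_sub 1
    have hA : HasDerivAt (fun t : ℝ => (1 + t) ^ p) (p * (1 + s) ^ (p - 1)) s := by
      have := (Real.hasDerivAt_rpow_const (x := 1 + s) (p := p)
        (Or.inr (by linarith))).comp s h2
      simpa [Function.comp_def] using this
    have hB : HasDerivAt (fun t : ℝ => (1 - t) ^ p) (p * (1 - s) ^ (p - 1) * (-1)) s := by
      have := (Real.hasDerivAt_rpow_const (x := 1 - s) (p := p)
        (Or.inr (by linarith))).comp s h1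
      simpa [mul_comm, mul_assoc, Function.comp_def] using this
    have hSig : HasDerivAt (fun t : ℝ => (1 + t) ^ p + (1 - t) ^ p)
        (p * (1 + s) ^ (p - 1) + p * (1 - s) ^ (p - 1) * (-1)) s := hA.add hB
    have hu' : HasDerivAt (fun t : ℝ => 1 + β * t ^ 2) (β * (2 * s)) s := by
      have : HasDerivAt (fun t : ℝ => t ^ 2) (2 * s) s := by
        simpa using hasDerivAt_pow 2 s
      simpa using (this.const_mul β).const_add 1
    have hlogu : HasDerivAt (fun t : ℝ => Real.log (1 + β * t ^ 2))
        (β * (2 * s) / (1 + β * s ^ 2)) s := hu'.log (ne_of_gt (hu s hs0))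
    have hlogSig : HasDerivAt (fun t : ℝ => Real.log ((1 + t) ^ p + (1 - t) ^ p))
        ((p * (1 + s) ^ (p - 1) + p * (1 - s) ^ (p - 1) * (-1)) /
          ((1 + s) ^ p + (1 - s) ^ p)) s := hSig.log (ne_of_gt (hSigpos s hs0 hs1))
    have := ((hlogu.const_mul (p / 2)).add_const (Real.log 2)).sub hlogSig
    exact this
  have hmono : MonotoneOn Φ (Icc 0 1) := by
    apply monotoneOn_of_deriv_nonneg (convex_Icc 0 1)
    · exact fun s hs => ((hder s hs.1 hs.2).continuousAt).continuousWithinAt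
    · intro s hs
      rw [interior_Icc] at hs
      exact ((hder s hs.1.le hs.2.le).differentiableAt).differentiableWithinAt
    · intro s hs
      rw [interior_Icc] at hs
      obtain ⟨hs0, hs1⟩ := hs
      rw [(hder s hs0.le hs1.le).deriv]
      rw [sub_nonneg]
      have hupos := hu s hs0.le
      have hSigp := hSigpos s hs0.le hs1.le
      rw [mul_div_assoc', div_le_div_iff₀ hSigp hupos]
      have e1 : (1 - s) ^ p = (1 - s) ^ (p - 1) * (1 - s) :=
        mc_aux_rpow_sub_one (by linarith) (by linarith)
      have e2 : (1 + s) ^ p = (1 + s) ^ (p - 1) * (1 + s) :=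
        mc_aux_rpow_sub_one (by linarith) (by linarith)
      have hE := mc_scalarE (β := p - 1) (t := s) hp1 hs0.le hs1.le
      rw [e1, e2]
      set A : ℝ := (1 + s) ^ (p - 1)
      set B : ℝ := (1 - s) ^ (p - 1)
      have hβ1 : β = p - 1 := hβdef
      nlinarith [hE, hp0]
  have h0 : Φ 0 = 0 := by
    simp only [hΦdef]
    norm_num
  have hΦt : 0 ≤ Φ t := by
    have := hmono (by simp : (0:ℝ) ∈ Icc 0 1) (⟨ht0, ht1⟩ : t ∈ Icc 0 1) ht0
    rwa [h0] at this
  -- convert back from logs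
  have hupos := hu t ht0
  have hSigp := hSigpos t ht0 ht1
  have hRpos : (0:ℝ) < 2 * (1 + β * t ^ 2) ^ (p / 2) := by
    positivity
  have hlog : Real.log ((1 + t) ^ p + (1 - t) ^ p) ≤
      Real.log (2 * (1 + β * t ^ 2) ^ (p / 2)) := by
    rw [Real.log_mul (by norm_num) (ne_of_gt (Real.rpow_pos_of_pos hupos _)),
      Real.log_rpow hupos]
    have hΦt' : 0 ≤ p / 2 * Real.log (1 + β * t ^ 2) + Real.log 2 -
        Real.log ((1 + t) ^ p + (1 - t) ^ p) := by simpa [hΦdef] using hΦt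
    linarith
  exact (Real.log_le_log_iff hSigp hRpos).mp hlog

lemma mc_sq_rpow {p z : ℝ} (hp : 0 < p) (hz : 0 ≤ z) : (z ^ 2) ^ (p / 2) = z ^ p := by
  rw [← Real.rpow_natCast z 2, ← Real.rpow_mul hz]
  congr 1
  ring

/-- general scalar two-point inequality, ordered case. -/
lemma mc_scalarGen_le {p x y : ℝ} (hp : 2 ≤ p) (hy : 0 ≤ y) (hyx : y ≤ x) :
    (x + y) ^ p + (x - y) ^ p ≤ 2 * (x ^ 2 + (p - 1) * y ^ 2) ^ (p / 2) := by
  have hx : 0 ≤ x := hy.trans hyx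
  rcases eq_or_lt_of_le hx with h | h
  · have hx0 : x = 0 := h.symm
    have hy0 : y = 0 := le_antisymm (hx0 ▸ hyx) hy
    subst hx0; subst hy0
    have hpne : p ≠ 0 := by intro h; rw [h] at hp; linarith
    have hpne2 : p / 2 ≠ 0 := div_ne_zero hpne two_ne_zero
    simp [Real.zero_rpow hpne, Real.zero_rpow hpne2]
  · set t : ℝ := y / x with htdef
    have ht0 : 0 ≤ t := div_nonneg hy h.le
    have ht1 : t ≤ 1 := (div_le_one h).mpr hyx
    have key := mc_scalarMain hp ht0 ht1
    have hxp : (0:ℝ) < x ^ p := Real.rpow_pos_of_pos h p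
    have e1 : (x + y) ^ p = x ^ p * (1 + t) ^ p := by
      rw [← Real.mul_rpow h.le (by linarith)]
      congr 1
      rw [htdef]
      field_simp
    have e2 : (x - y) ^ p = x ^ p * (1 - t) ^ p := by
      rw [← Real.mul_rpow h.le (by linarith [(div_le_one h).mpr hyx])]
      congr 1
      rw [htdef]
      field_simp
    have e3 : (x ^ 2 + (p - 1) * y ^ 2) ^ (p / 2) =
        x ^ p * (1 + (p - 1) * t ^ 2) ^ (p / 2) := by
      have hu0 : (0:ℝ) ≤ 1 + (p - 1) * t ^ 2 := by nlinarith
      rw [← mc_sq_rpow (by linarith : (0:ℝ) < p) h.le,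
        ← Real.mul_rpow (by positivity) hu0]
      congr 1
      rw [htdef]
      field_simp
    rw [e1, e2, e3]
    nlinarith [key, hxp]

lemma mc_scalarGen {p x y : ℝ} (hp : 2 ≤ p) (hx : 0 ≤ x) (hy : 0 ≤ y) :
    (x + y) ^ p + |x - y| ^ p ≤ 2 * (x ^ 2 + (p - 1) * y ^ 2) ^ (p / 2) := by
  rcases le_total y x with h | h
  · rw [abs_of_nonneg (by linarith)]
    exact mc_scalarGen_le hp hy h
  · rw [abs_of_nonpos (by linarith)]
    have := mc_scalarGen_le hp hx h
    have hmono : (y ^ 2 + (p - 1) * x ^ 2) ^ (p / 2) ≤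
        (x ^ 2 + (p - 1) * y ^ 2) ^ (p / 2) := by
      apply Real.rpow_le_rpow (by nlinarith [sq_nonneg x, sq_nonneg y]) _ (by linarith)
      nlinarith [sq_nonneg x, sq_nonneg y,
        mul_nonneg (by linarith : (0:ℝ) ≤ p - 2)
          (sub_nonneg.mpr (pow_le_pow_left₀ hx h 2))]
    calc (x + y) ^ p + (-(x - y)) ^ p = (y + x) ^ p + (y - x) ^ p := by ring_nf
    _ ≤ 2 * (y ^ 2 + (p - 1) * x ^ 2) ^ (p / 2) := this
    _ ≤ 2 * (x ^ 2 + (p - 1) * y ^ 2) ^ (p / 2) := by linarith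

/-- Hilbert-space two-point inequality (optimal 2-uniform smoothness). -/
lemma mc_hilbert {F : Type*} [NormedAddCommGroup F] [InnerProductSpace ℝ F]
    {p : ℝ} (hp : 2 ≤ p) (a b : F) :
    ‖a + b‖ ^ p + ‖a - b‖ ^ p ≤ 2 * (‖a‖ ^ 2 + (p - 1) * ‖b‖ ^ 2) ^ (p / 2) := by
  have hp0 : (0:ℝ) < p := by linarith
  set N : ℝ := ‖a‖ ^ 2 + ‖b‖ ^ 2 with hN
  set s : ℝ := inner ℝ a b with hs
  set c : ℝ := ‖a‖ * ‖b‖ with hc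
  have hsc : |s| ≤ c := abs_real_inner_le_norm a b
  have hc0 : 0 ≤ c := by positivity
  have hNc : 0 ≤ N - 2 * c := by
    have := sq_nonneg (‖a‖ - ‖b‖)
    simp only [hN, hc]; nlinarith
  -- convexity of φ on [-c, c]
  set φ : ℝ → ℝ := fun s => (N + 2 * s) ^ (p / 2) + (N - 2 * s) ^ (p / 2) with hφ
  have hconv : ConvexOn ℝ (Icc (-c) c) φ := by
    have hq : (1:ℝ) ≤ p / 2 := by linarith
    have base := convexOn_rpow (p := p / 2) hq
    constructor
    · exact convex_Icc _ _
    · intro u hu v hv α γ hα hγ hαγ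
      have hu1 : (0:ℝ) ≤ N + 2 * u := by rcases hu with ⟨h1, h2⟩; linarith
      have hu2 : (0:ℝ) ≤ N - 2 * u := by rcases hu with ⟨h1, h2⟩; linarith
      have hv1 : (0:ℝ) ≤ N + 2 * v := by rcases hv with ⟨h1, h2⟩; linarith
      have hv2 : (0:ℝ) ≤ N - 2 * v := by rcases hv with ⟨h1, h2⟩; linarith
      have c1 := base.2 (Set.mem_Ici.mpr hu1) (Set.mem_Ici.mpr hv1) hα hγ hαγ
      have c2 := base.2 (Set.mem_Ici.mpr hu2) (Set.mem_Ici.mpr hv2) hα hγ hαγ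
      have e1 : N + 2 * (α * u + γ * v) = α * (N + 2 * u) + γ * (N + 2 * v) := by
        have : α * N + γ * N = N := by rw [← add_mul, hαγ, one_mul]
        ring_nf
        nlinarith [this]
      have e2 : N - 2 * (α * u + γ * v) = α * (N - 2 * u) + γ * (N - 2 * v) := by
        have : α * N + γ * N = N := by rw [← add_mul, hαγ, one_mul]
        ring_nf
        nlinarith [this]
      simp only [hφ, smul_eq_mul]
      rw [e1, e2]
      calc (α * (N + 2 * u) + γ * (N + 2 * v)) ^ (p / 2) +
            (α * (N - 2 * u) + γ * (N - 2 * v)) ^ (p / 2)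
          ≤ (α * (N + 2 * u) ^ (p / 2) + γ * (N + 2 * v) ^ (p / 2)) +
            (α * (N - 2 * u) ^ (p / 2) + γ * (N - 2 * v) ^ (p / 2)) := by
            have := c1; have := c2
            simp only [smul_eq_mul] at c1 c2
            linarith
      _ = α * ((N + 2 * u) ^ (p / 2) + (N - 2 * u) ^ (p / 2)) +
            γ * ((N + 2 * v) ^ (p / 2) + (N - 2 * v) ^ (p / 2)) := by ring
  have hmem : s ∈ Icc (-c) c := ⟨neg_le_of_abs_le hsc, le_of_abs_le hsc⟩
  have hseg : s ∈ segment ℝ (-c) c := by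
    rw [segment_eq_Icc (by linarith : -c ≤ c)]; exact hmem
  have hmax := hconv.le_on_segment (by simp [hc0] : -c ∈ Icc (-c) c)
    (by simp [hc0] : c ∈ Icc (-c) c) hseg
  have hφsym : φ (-c) = φ c := by simp only [hφ]; ring_nf
  rw [hφsym, max_self] at hmax
  -- identify the norms
  have hab : ‖a + b‖ ^ p = (N + 2 * s) ^ (p / 2) := by
    rw [← mc_sq_rpow hp0 (norm_nonneg (a + b))]
    congr 2
    rw [← real_inner_self_eq_norm_sq]
    simp only [hN, hs]
    rw [inner_add_add_self]
    simp [real_inner_self_eq_norm_sq, real_inner_comm b a]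
    ring
  have hab' : ‖a - b‖ ^ p = (N - 2 * s) ^ (p / 2) := by
    rw [← mc_sq_rpow hp0 (norm_nonneg (a - b))]
    congr 2
    rw [← real_inner_self_eq_norm_sq]
    simp only [hN, hs]
    rw [inner_sub_sub_self]
    simp [real_inner_self_eq_norm_sq, real_inner_comm b a]
    ring
  have hφc : φ c = (‖a‖ + ‖b‖) ^ p + |‖a‖ - ‖b‖| ^ p := by
    simp only [hφ, hc]
    have e1 : N + 2 * (‖a‖ * ‖b‖) = (‖a‖ + ‖b‖) ^ 2 := by simp only [hN]; ring
    have e2 : N - 2 * (‖a‖ * ‖b‖) = (‖a‖ - ‖b‖) ^ 2 := by simp only [hN]; ring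
    rw [e1, e2, mc_sq_rpow hp0 (by positivity), ← sq_abs (‖a‖ - ‖b‖),
      mc_sq_rpow hp0 (abs_nonneg _)]
  calc ‖a + b‖ ^ p + ‖a - b‖ ^ p = φ s := by rw [hab, hab', hφ]
  _ ≤ φ c := hmax
  _ = (‖a‖ + ‖b‖) ^ p + |‖a‖ - ‖b‖| ^ p := hφc
  _ ≤ 2 * (‖a‖ ^ 2 + (p - 1) * ‖b‖ ^ 2) ^ (p / 2) :=
      mc_scalarGen hp (norm_nonneg a) (norm_nonneg b)

section MeasurePart

variable {Ω : Type} [MeasurableSpace Ω] {d : ℕ}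

local notation "H" => EuclideanSpace ℝ (Fin d)

lemma mc_meas_integrand {p : ℝ} {f : Ω → H} (hf : Measurable f) :
    Measurable (fun ω => ENNReal.ofReal (‖f ω‖ ^ p)) :=
  (hf.norm.pow_const _).ennreal_ofReal

/-- Jensen-Fubini: adding an independent mean-zero variable increases `p`-th norm moments. -/
lemma mc_jensen_fubini (μ : Measure Ω) [IsProbabilityMeasure μ]
    {p : ℝ} (hp : 1 ≤ p)
    (U V : Ω → H) (hU : Measurable U) (hV : Measurable V)
    (hUV : IndepFun U V μ) (hVi : Integrable V μ) (hV0 : ∫ ω, V ω ∂μ = 0) :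
    ∫⁻ ω, ENNReal.ofReal (‖U ω‖ ^ p) ∂μ ≤ ∫⁻ ω, ENNReal.ofReal (‖U ω + V ω‖ ^ p) ∂μ := by
  have hp0 : (0:ℝ) ≤ p := by linarith
  set ν : Measure H := μ.map V with hν
  haveI : IsProbabilityMeasure ν := Measure.isProbabilityMeasure_map hV.aemeasurable
  have hVid : Integrable (id : H → H) ν := by
    rw [hν, integrable_map_measure aestronglyMeasurable_id hV.aemeasurable]
    simpa using hVi
  have hmean : ∫ v, (id v : H) ∂ν = (0 : H) := by
    rw [hν, integral_map hV.aemeasurable aestronglyMeasurable_id]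
    simpa using hV0
  -- key pointwise-in-u inequality
  have key : ∀ u : H, ENNReal.ofReal (‖u‖ ^ p) ≤
      ∫⁻ v, ENNReal.ofReal (‖u + v‖ ^ p) ∂ν := by
    intro u
    set g : H → ℝ := fun v => ‖u + v‖ with hg
    have haddint : Integrable (fun v : H => u + v) ν :=
      (integrable_const u).add hVid
    have hgint : Integrable g ν := haddint.norm
    have hnorm : ‖u‖ ≤ ∫ v, g v ∂ν := by
      have : ∫ v, (u + v) ∂ν = u := by
        have := integral_add (integrable_const u) hVid
        simp only [id] at this hmean
        rw [this, hmean, integral_const]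
        simp
      calc ‖u‖ = ‖∫ v, (u + v) ∂ν‖ := by rw [this]
      _ ≤ ∫ v, ‖u + v‖ ∂ν := norm_integral_le_integral_norm _
    have h1 : ENNReal.ofReal ‖u‖ ≤ ∫⁻ v, ENNReal.ofReal (g v) ∂ν := by
      rw [← ofReal_integral_eq_lintegral_ofReal hgint
        (Filter.Eventually.of_forall (fun v => norm_nonneg _))]
      exact ENNReal.ofReal_le_ofReal hnorm
    -- Jensen: L1 norm ≤ Lp norm on probability space
    have h2 : ∫⁻ v, ENNReal.ofReal (g v) ∂ν ≤
        (∫⁻ v, ENNReal.ofReal (g v) ^ p ∂ν) ^ (1 / p) := by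
      have hq0 : (ENNReal.ofReal p) ≠ 0 := by
        simp [ENNReal.ofReal_eq_zero]; linarith
      have hqtop : (ENNReal.ofReal p) ≠ ∞ := ENNReal.ofReal_ne_top
      have hle : eLpNorm g 1 ν ≤ eLpNorm g (ENNReal.ofReal p) ν :=
        eLpNorm_le_eLpNorm_of_exponent_le (ENNReal.one_le_ofReal.mpr hp)
          hgint.aestronglyMeasurable
      rw [eLpNorm_one_eq_lintegral_enorm,
        eLpNorm_eq_lintegral_rpow_enorm_toReal hq0 hqtop] at hle
      rw [ENNReal.toReal_ofReal hp0] at hle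
      have heq : ∀ v : H, (‖g v‖ₑ : ℝ≥0∞) = ENNReal.ofReal (g v) := by
        intro v
        rw [← Real.enorm_eq_ofReal (norm_nonneg _)]
      calc ∫⁻ v, ENNReal.ofReal (g v) ∂ν = ∫⁻ v, (‖g v‖ₑ : ℝ≥0∞) ∂ν := by
            simp_rw [heq]
      _ ≤ (∫⁻ v, (‖g v‖ₑ : ℝ≥0∞) ^ p ∂ν) ^ (1 / p) := hle
      _ = (∫⁻ v, ENNReal.ofReal (g v) ^ p ∂ν) ^ (1 / p) := by simp_rw [heq]
    calc ENNReal.ofReal (‖u‖ ^ p) = ENNReal.ofReal ‖u‖ ^ p := by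
          rw [← ENNReal.ofReal_rpow_of_nonneg (norm_nonneg _) hp0]
    _ ≤ ((∫⁻ v, ENNReal.ofReal (g v) ^ p ∂ν) ^ (1 / p)) ^ p :=
          ENNReal.rpow_le_rpow (h1.trans h2) hp0
    _ = ∫⁻ v, ENNReal.ofReal (g v) ^ p ∂ν := by
          rw [← ENNReal.rpow_mul, one_div, inv_mul_cancel₀ (by linarith : p ≠ 0),
            ENNReal.rpow_one]
    _ = ∫⁻ v, ENNReal.ofReal (‖u + v‖ ^ p) ∂ν := by
          congr 1
          ext v
          rw [ENNReal.ofReal_rpow_of_nonneg (norm_nonneg _) hp0]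
  -- now use the product structure
  have hpair : μ.map (fun ω => (U ω, V ω)) = (μ.map U).prod ν :=
    (indepFun_iff_map_prod_eq_prod_map_map hU.aemeasurable hV.aemeasurable).mp hUV
  have hmeasz : Measurable (fun z : H × H => ENNReal.ofReal (‖z.1 + z.2‖ ^ p)) :=
    (((measurable_fst.add measurable_snd).norm).pow_const _).ennreal_ofReal
  have hright : ∫⁻ ω, ENNReal.ofReal (‖U ω + V ω‖ ^ p) ∂μ =
      ∫⁻ u, ∫⁻ v, ENNReal.ofReal (‖u + v‖ ^ p) ∂ν ∂(μ.map U) := by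
    rw [← lintegral_map hmeasz (hU.prodMk hV), hpair,
      lintegral_prod _ hmeasz.aemeasurable]
  have hleft : ∫⁻ ω, ENNReal.ofReal (‖U ω‖ ^ p) ∂μ =
      ∫⁻ u, ENNReal.ofReal (‖u‖ ^ p) ∂(μ.map U) := by
    rw [lintegral_map ((measurable_norm.pow_const p).ennreal_ofReal) hU]
  rw [hleft, hright]
  exact lintegral_mono fun u => key u

end MeasurePart

section MeasurePart2

variable {Ω : Type} [MeasurableSpace Ω] {d : ℕ}

local notation "H" => EuclideanSpace ℝ (Fin d)

lemma mc_step (μ : Measure Ω) [IsProbabilityMeasure μ] {p : ℝ} (hp : 2 ≤ p)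
    (S Y : Ω → H) (hS : Measurable S) (hY : Measurable Y)
    (hSY : IndepFun S Y μ) (hYi : Integrable Y μ) (hY0 : ∫ ω, Y ω ∂μ = 0) :
    (∫⁻ ω, ENNReal.ofReal (‖S ω + Y ω‖ ^ p) ∂μ) ^ (2 / p) ≤
      (∫⁻ ω, ENNReal.ofReal (‖S ω‖ ^ p) ∂μ) ^ (2 / p) +
      2 * ENNReal.ofReal (p - 1) * (∫⁻ ω, ENNReal.ofReal (‖Y ω‖ ^ p) ∂μ) ^ (2 / p) := by
  have hp0 : (0:ℝ) < p := by linarith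
  have hp1 : (1:ℝ) ≤ p := by linarith
  have hq1 : (1:ℝ) ≤ p / 2 := by linarith
  have hq0 : (0:ℝ) < p / 2 := by linarith
  have hr0 : (0:ℝ) < 2 / p := by positivity
  have hqr : (p / 2) * (2 / p) = 1 := by field_simp
  have hrq : (2 / p) * (p / 2) = 1 := by field_simp
  set a := ∫⁻ ω, ENNReal.ofReal (‖S ω + Y ω‖ ^ p) ∂μ with ha
  set b := ∫⁻ ω, ENNReal.ofReal (‖S ω - Y ω‖ ^ p) ∂μ with hb
  set c := ∫⁻ ω, ENNReal.ofReal (‖S ω‖ ^ p) ∂μ with hc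
  set m := ∫⁻ ω, ENNReal.ofReal (‖Y ω‖ ^ p) ∂μ with hm
  set β : ℝ≥0∞ := ENNReal.ofReal (p - 1) with hβ
  -- Step 1 : c ≤ b
  have h1 : c ≤ b := by
    have hind : IndepFun S (fun ω => -Y ω) μ := hSY.comp measurable_id measurable_neg
    have hjf := mc_jensen_fubini μ hp1 S (fun ω => -Y ω) hS hY.neg hind hYi.neg
      (by rw [integral_neg, hY0, neg_zero])
    have heq : ∫⁻ ω, ENNReal.ofReal (‖S ω + -Y ω‖ ^ p) ∂μ = b :=
      lintegral_congr fun ω => by rw [← sub_eq_add_neg]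
    rw [heq] at hjf
    exact hjf
  -- Step 2 : a + b ≤ 2 * ∫⁻ (F+G)^(p/2)
  set F : Ω → ℝ≥0∞ := fun ω => ENNReal.ofReal (‖S ω‖ ^ 2) with hF
  set G : Ω → ℝ≥0∞ := fun ω => ENNReal.ofReal ((p - 1) * ‖Y ω‖ ^ 2) with hG
  have hFmeas : Measurable F := ((hS.norm.pow_const _).ennreal_ofReal)
  have hGmeas : Measurable G := (((hY.norm.pow_const _).const_mul _).ennreal_ofReal)
  have h2 : a + b ≤ 2 * ∫⁻ ω, (F ω + G ω) ^ (p / 2) ∂μ := by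
    have hptwise : ∀ ω, ENNReal.ofReal (‖S ω + Y ω‖ ^ p) +
        ENNReal.ofReal (‖S ω - Y ω‖ ^ p) ≤ 2 * (F ω + G ω) ^ (p / 2) := by
      intro ω
      have hkey := mc_hilbert hp (S ω) (Y ω)
      have e1 : F ω + G ω = ENNReal.ofReal (‖S ω‖ ^ 2 + (p - 1) * ‖Y ω‖ ^ 2) := by
        show ENNReal.ofReal (‖S ω‖ ^ 2) + ENNReal.ofReal ((p - 1) * ‖Y ω‖ ^ 2) = _
        rw [ENNReal.ofReal_add (by positivity)
          (by nlinarith [sq_nonneg (‖Y ω‖)])]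
      calc ENNReal.ofReal (‖S ω + Y ω‖ ^ p) + ENNReal.ofReal (‖S ω - Y ω‖ ^ p)
          = ENNReal.ofReal (‖S ω + Y ω‖ ^ p + ‖S ω - Y ω‖ ^ p) := by
            rw [ENNReal.ofReal_add (by positivity) (by positivity)]
      _ ≤ ENNReal.ofReal (2 * (‖S ω‖ ^ 2 + (p - 1) * ‖Y ω‖ ^ 2) ^ (p / 2)) :=
            ENNReal.ofReal_le_ofReal hkey
      _ = 2 * (F ω + G ω) ^ (p / 2) := by
            rw [ENNReal.ofReal_mul (by norm_num), e1,
              ← ENNReal.ofReal_rpow_of_nonneg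
                (by nlinarith [sq_nonneg (‖S ω‖), sq_nonneg (‖Y ω‖)]) hq0.le]
            norm_num
    calc a + b = ∫⁻ ω, (ENNReal.ofReal (‖S ω + Y ω‖ ^ p) +
          ENNReal.ofReal (‖S ω - Y ω‖ ^ p)) ∂μ := by
          rw [lintegral_add_left (f := fun ω => ENNReal.ofReal (‖S ω + Y ω‖ ^ p)) (((hS.add hY).norm.pow_const _).ennreal_ofReal)]
    _ ≤ ∫⁻ ω, 2 * (F ω + G ω) ^ (p / 2) ∂μ := lintegral_mono hptwise
    _ = 2 * ∫⁻ ω, (F ω + G ω) ^ (p / 2) ∂μ :=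
          lintegral_const_mul 2 ((hFmeas.add hGmeas).pow_const _)
  -- Step 3 : Minkowski
  have hFq : ∫⁻ ω, F ω ^ (p / 2) ∂μ = c := by
    refine lintegral_congr fun ω => ?_
    show ENNReal.ofReal (‖S ω‖ ^ 2) ^ (p / 2) = _
    rw [ENNReal.ofReal_rpow_of_nonneg (by positivity) hq0.le,
      mc_sq_rpow hp0 (norm_nonneg _)]
  have hGq : ∫⁻ ω, G ω ^ (p / 2) ∂μ = β ^ (p / 2) * m := by
    have heach : ∀ ω, G ω ^ (p / 2) = β ^ (p / 2) * ENNReal.ofReal (‖Y ω‖ ^ p) := by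
      intro ω
      show ENNReal.ofReal ((p - 1) * ‖Y ω‖ ^ 2) ^ (p / 2) = _
      rw [ENNReal.ofReal_mul (by linarith), ENNReal.mul_rpow_of_nonneg _ _ hq0.le,
        ENNReal.ofReal_rpow_of_nonneg (x := ‖Y ω‖ ^ 2) (by positivity) hq0.le,
        mc_sq_rpow hp0 (norm_nonneg _)]
    rw [lintegral_congr heach,
      lintegral_const_mul _ ((hY.norm.pow_const _).ennreal_ofReal)]
  have hmink : (∫⁻ ω, (F ω + G ω) ^ (p / 2) ∂μ) ^ (2 / p) ≤
      c ^ (2 / p) + β * m ^ (2 / p) := by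
    have hLp := ENNReal.lintegral_Lp_add_le (μ := μ) hFmeas.aemeasurable hGmeas.aemeasurable hq1
    rw [hFq, hGq] at hLp
    have h2p : 1 / (p / 2) = 2 / p := by field_simp
    rw [h2p] at hLp
    have hps : ∫⁻ ω, ((F + G) ω) ^ (p / 2) ∂μ = ∫⁻ ω, (F ω + G ω) ^ (p / 2) ∂μ :=
      lintegral_congr fun ω => by rw [Pi.add_apply]
    rw [hps] at hLp
    refine hLp.trans (le_of_eq ?_)
    rw [ENNReal.mul_rpow_of_nonneg _ _ hr0.le, ← ENNReal.rpow_mul, hqr, ENNReal.rpow_one]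
  -- combine: a + c ≤ 2 * D ^ (p/2), D := c^(2/p) + β * m^(2/p)
  set D : ℝ≥0∞ := c ^ (2 / p) + β * m ^ (2 / p) with hD
  have h4 : a + c ≤ 2 * D ^ (p / 2) := by
    have hfg : ∫⁻ ω, (F ω + G ω) ^ (p / 2) ∂μ ≤ D ^ (p / 2) := by
      have := ENNReal.rpow_le_rpow hmink hq0.le
      rwa [← ENNReal.rpow_mul, hrq, ENNReal.rpow_one] at this
    calc a + c ≤ a + b := by gcongr
    _ ≤ 2 * ∫⁻ ω, (F ω + G ω) ^ (p / 2) ∂μ := h2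
    _ ≤ 2 * D ^ (p / 2) := by gcongr
  -- concavity step : a^(2/p) + c^(2/p) ≤ 2 * D
  have h5 : a ^ (2 / p) + c ^ (2 / p) ≤ 2 * D := by
    have hmean := ENNReal.rpow_arith_mean_le_arith_mean2_rpow
      (1/2) (1/2) (a ^ (2 / p)) (c ^ (2 / p)) (by
        rw [← two_mul, one_div, ENNReal.mul_inv_cancel (by norm_num) (by norm_num)]) hq1
    rw [← ENNReal.rpow_mul, ← ENNReal.rpow_mul, hrq, ENNReal.rpow_one, ENNReal.rpow_one]
      at hmean
    have hhalf : (1/2 : ℝ≥0∞) * a + 1/2 * c ≤ D ^ (p / 2) := by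
      calc (1/2 : ℝ≥0∞) * a + 1/2 * c = 1/2 * (a + c) := by rw [mul_add]
      _ ≤ 1/2 * (2 * D ^ (p / 2)) := by gcongr
      _ = D ^ (p / 2) := by
          rw [← mul_assoc, one_div, ENNReal.inv_mul_cancel (by norm_num) (by norm_num),
            one_mul]
    have hmean2 : ((1/2 : ℝ≥0∞) * a ^ (2/p) + 1/2 * c ^ (2/p)) ^ (p/2) ≤ D ^ (p / 2) :=
      hmean.trans hhalf
    have hfin := (ENNReal.rpow_le_rpow_iff hq0).mp hmean2
    calc a ^ (2/p) + c ^ (2/p)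
        = 2 * ((1/2 : ℝ≥0∞) * a ^ (2/p) + 1/2 * c ^ (2/p)) := by
          rw [mul_add, ← mul_assoc, ← mul_assoc, one_div,
            ENNReal.mul_inv_cancel (by norm_num) (by norm_num), one_mul, one_mul]
    _ ≤ 2 * D := by gcongr
  -- conclude
  rcases eq_or_ne c ⊤ with hctop | hcne
  · have : c ^ (2/p) = ⊤ := by rw [hctop]; exact ENNReal.top_rpow_of_pos hr0
    rw [this]
    simp
  · have hcr : c ^ (2 / p) ≠ ⊤ := ENNReal.rpow_ne_top_of_nonneg hr0.le hcne
    have h2D : 2 * D = (c ^ (2/p) + 2 * β * m ^ (2/p)) + c ^ (2/p) := by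
      rw [hD]; ring
    rw [h2D] at h5
    exact (ENNReal.add_le_add_iff_right hcr).mp h5

end MeasurePart2

section MeasurePart3

variable {Ω : Type} [MeasurableSpace Ω] {d : ℕ}

local notation "H" => EuclideanSpace ℝ (Fin d)

lemma mc_sum (μ : Measure Ω) [IsProbabilityMeasure μ] {p : ℝ} (hp : 2 ≤ p)
    {n : ℕ} (Y : Fin n → Ω → H) (hmY : ∀ i, Measurable (Y i))
    (hind : iIndepFun Y μ)
    (hinti : ∀ i, Integrable (Y i) μ) (h0 : ∀ i, ∫ ω, Y i ω ∂μ = 0)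
    (M : ℝ≥0∞) (hM : ∀ i, ∫⁻ ω, ENNReal.ofReal (‖Y i ω‖ ^ p) ∂μ ≤ M)
    (s : Finset (Fin n)) :
    (∫⁻ ω, ENNReal.ofReal (‖∑ i ∈ s, Y i ω‖ ^ p) ∂μ) ^ (2 / p) ≤
      s.card * (2 * ENNReal.ofReal (p - 1) * M ^ (2 / p)) := by
  classical
  have hr0 : (0:ℝ) < 2 / p := by positivity
  induction s using Finset.induction_on with
  | empty =>
      simp [Real.zero_rpow (show p ≠ 0 by positivity),
        ENNReal.zero_rpow_of_pos hr0]
  | @insert j s hj ih =>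
      have hSmeas : Measurable (fun ω => ∑ i ∈ s, Y i ω) :=
        Finset.measurable_sum s (fun i _ => hmY i)
      have hindep : IndepFun (fun ω => ∑ i ∈ s, Y i ω) (Y j) μ := by
        have := hind.indepFun_finset_sum_of_notMem hmY hj
        have heq : (∑ i ∈ s, Y i) = fun ω => ∑ i ∈ s, Y i ω := by
          funext ω; rw [Finset.sum_apply]
        rwa [heq] at this
      have hstep := mc_step μ hp (fun ω => ∑ i ∈ s, Y i ω) (Y j) hSmeas (hmY j)
        hindep (hinti j) (h0 j)
      have hsum : ∀ ω, ∑ i ∈ insert j s, Y i ω = (∑ i ∈ s, Y i ω) + Y j ω := by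
        intro ω; rw [Finset.sum_insert hj, add_comm]
      have hL : (∫⁻ ω, ENNReal.ofReal (‖∑ i ∈ insert j s, Y i ω‖ ^ p) ∂μ) =
          ∫⁻ ω, ENNReal.ofReal (‖(∑ i ∈ s, Y i ω) + Y j ω‖ ^ p) ∂μ :=
        lintegral_congr fun ω => by rw [hsum ω]
      have hYj : (∫⁻ ω, ENNReal.ofReal (‖Y j ω‖ ^ p) ∂μ) ^ (2 / p) ≤ M ^ (2 / p) :=
        ENNReal.rpow_le_rpow (hM j) hr0.le
      rw [hL]
      calc (∫⁻ ω, ENNReal.ofReal (‖(∑ i ∈ s, Y i ω) + Y j ω‖ ^ p) ∂μ) ^ (2 / p)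
          ≤ (∫⁻ ω, ENNReal.ofReal (‖∑ i ∈ s, Y i ω‖ ^ p) ∂μ) ^ (2 / p) +
            2 * ENNReal.ofReal (p - 1) *
              (∫⁻ ω, ENNReal.ofReal (‖Y j ω‖ ^ p) ∂μ) ^ (2 / p) := hstep
      _ ≤ s.card * (2 * ENNReal.ofReal (p - 1) * M ^ (2 / p)) +
            2 * ENNReal.ofReal (p - 1) * M ^ (2 / p) := by
            gcongr
      _ = (insert j s).card * (2 * ENNReal.ofReal (p - 1) * M ^ (2 / p)) := by
            rw [Finset.card_insert_of_notMem hj]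
            push_cast
            rw [add_mul, one_mul]

end MeasurePart3



/-- Monte Carlo `L^p` error estimate. For i.i.d. integrable
`ℝ^d`-valued random variables `X₁, …, X_n`,
`‖E[X₁] - n⁻¹ ∑ Xᵢ‖_{L^p} ≤ 2 √((p-1)/n) · ‖X₁ - E[X₁]‖_{L^p}`. -/
theorem monte_carlo_Lp_estimate
    {Ω : Type} [MeasurableSpace Ω] (μ : Measure Ω) [IsProbabilityMeasure μ]
    (p : ℝ) (hp : 2 ≤ p) (d n : ℕ) (hd : 1 ≤ d) (hn : 0 < n)
    (X : Fin n → Ω → EuclideanSpace ℝ (Fin d))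
    (hmeas : ∀ i, Measurable (X i))
    (hindep : iIndepFun X μ)
    (hid : ∀ i, IdentDistrib (X i) (X ⟨0, hn⟩) μ μ)
    (hint : Integrable (X ⟨0, hn⟩) μ) :
    (∫ ω, ‖(∫ ω', X ⟨0, hn⟩ ω' ∂μ) - (n : ℝ)⁻¹ • ∑ i, X i ω‖ ^ p ∂μ) ^ p⁻¹ ≤
      2 * Real.sqrt ((p - 1) / n) *
        (∫ ω, ‖X ⟨0, hn⟩ ω - ∫ ω', X ⟨0, hn⟩ ω' ∂μ‖ ^ p ∂μ) ^ p⁻¹ := by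
  classical
  have hp0 : (0:ℝ) < p := by linarith
  have hpne : p ≠ 0 := ne_of_gt hp0
  have hβ0 : (0:ℝ) ≤ p - 1 := by linarith
  set j0 : Fin n := ⟨0, hn⟩ with hj0
  set mv : EuclideanSpace ℝ (Fin d) := ∫ ω', X j0 ω' ∂μ with hmv
  set Z : Fin n → Ω → EuclideanSpace ℝ (Fin d) := fun i ω => mv - X i ω with hZ
  have hZm : ∀ i, Measurable (Z i) := fun i => measurable_const.sub (hmeas i)
  have hZind : iIndepFun Z μ :=
    hindep.comp (fun _ x => mv - x) (fun _ => measurable_const.sub measurable_id)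
  have hXint : ∀ i, Integrable (X i) μ := fun i => (hid i).integrable_iff.mpr hint
  have hZint : ∀ i, Integrable (Z i) μ := fun i => (integrable_const mv).sub (hXint i)
  have hZ0 : ∀ i, ∫ ω, Z i ω ∂μ = 0 := by
    intro i
    rw [hZ]
    rw [integral_sub (integrable_const mv) (hXint i), (hid i).integral_eq,
      integral_const]
    simp [hmv]
  set M : ℝ≥0∞ := ∫⁻ ω, ENNReal.ofReal (‖X j0 ω - mv‖ ^ p) ∂μ with hM
  have hMi : ∀ i, ∫⁻ ω, ENNReal.ofReal (‖Z i ω‖ ^ p) ∂μ = M := by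
    intro i
    have hidZ : IdentDistrib (Z i) (fun ω => mv - X j0 ω) μ μ :=
      (hid i).comp (measurable_const.sub measurable_id)
    have hidf : IdentDistrib (fun ω => ENNReal.ofReal (‖Z i ω‖ ^ p))
        (fun ω => ENNReal.ofReal (‖mv - X j0 ω‖ ^ p)) μ μ :=
      hidZ.comp ((measurable_norm.pow_const p).ennreal_ofReal)
    rw [hidf.lintegral_eq]
    exact lintegral_congr fun ω => by rw [norm_sub_rev]
  set T : Ω → EuclideanSpace ℝ (Fin d) := fun ω => ∑ i, Z i ω with hT
  have hTm : Measurable T := Finset.measurable_sum _ (fun i _ => hZm i)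
  set A : ℝ≥0∞ := ∫⁻ ω, ENNReal.ofReal (‖T ω‖ ^ p) ∂μ with hA
  -- rewriting the left-hand integrand
  have hnR : (0:ℝ) < (n:ℝ) := by exact_mod_cast hn
  have hinv0 : (0:ℝ) < ((n:ℝ))⁻¹ := by positivity
  have hintegrand : ∀ ω, ‖mv - (n : ℝ)⁻¹ • ∑ i, X i ω‖ ^ p =
      ((n:ℝ)⁻¹) ^ p * ‖T ω‖ ^ p := by
    intro ω
    have hsum : T ω = (n:ℝ) • mv - ∑ i, X i ω := by
      rw [hT]
      show ∑ i, (mv - X i ω) = _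
      rw [Finset.sum_sub_distrib, Finset.sum_const, Finset.card_univ, Fintype.card_fin,
        ← Nat.cast_smul_eq_nsmul ℝ n mv]
    have hident : mv - (n : ℝ)⁻¹ • ∑ i, X i ω = (n:ℝ)⁻¹ • T ω := by
      rw [hsum, smul_sub, smul_smul, inv_mul_cancel₀ (ne_of_gt hnR), one_smul]
    rw [hident, norm_smul, Real.norm_eq_abs, abs_of_pos hinv0,
      Real.mul_rpow hinv0.le (norm_nonneg _)]
  have hlhs_lint : ∫⁻ ω, ENNReal.ofReal (‖mv - (n : ℝ)⁻¹ • ∑ i, X i ω‖ ^ p) ∂μ =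
      ENNReal.ofReal (((n:ℝ)⁻¹) ^ p) * A := by
    rw [hA, ← lintegral_const_mul _ ((hTm.norm.pow_const p).ennreal_ofReal)]
    refine lintegral_congr fun ω => ?_
    rw [hintegrand ω, ENNReal.ofReal_mul (by positivity)]
  -- the main moment bound
  have hmain : A ^ (2 / p) ≤ n * (2 * ENNReal.ofReal (p - 1) * M ^ (2 / p)) := by
    have := mc_sum μ hp Z hZm hZind hZint hZ0 M (fun i => le_of_eq (hMi i)) Finset.univ
    rwa [Finset.card_univ, Fintype.card_fin] at this
  -- measurability of integrands
  have hfmeas : Measurable (fun ω => ‖mv - (n : ℝ)⁻¹ • ∑ i, X i ω‖ ^ p) :=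
    ((measurable_const.sub ((Finset.measurable_sum _ (fun i _ => hmeas i)).const_smul
      ((n:ℝ)⁻¹))).norm.pow_const p)
  have hgmeas : Measurable (fun ω => ‖X j0 ω - mv‖ ^ p) :=
    ((hmeas j0).sub measurable_const).norm.pow_const p
  by_cases hMtop : M = ⊤
  -- degenerate case: infinite p-th moment
  · have hAtop : A = ⊤ := by
      have hjnotmem : j0 ∉ (Finset.univ.erase j0) := Finset.notMem_erase _ _
      have hV : IndepFun (Z j0) (fun ω => ∑ i ∈ Finset.univ.erase j0, Z i ω) μ := by
        have := hZind.indepFun_finset_sum_of_notMem hZm hjnotmem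
        have heq : (∑ i ∈ Finset.univ.erase j0, Z i) =
            fun ω => ∑ i ∈ Finset.univ.erase j0, Z i ω := by
          funext ω; rw [Finset.sum_apply]
        rw [heq] at this
        exact this.symm
      have hVi : Integrable (fun ω => ∑ i ∈ Finset.univ.erase j0, Z i ω) μ :=
        integrable_finset_sum _ (fun i _ => hZint i)
      have hV0 : ∫ ω, (∑ i ∈ Finset.univ.erase j0, Z i ω) ∂μ = 0 := by
        rw [integral_finset_sum _ (fun i _ => hZint i)]
        exact Finset.sum_eq_zero (fun i _ => hZ0 i)
      have hjf := mc_jensen_fubini μ (by linarith : (1:ℝ) ≤ p) (Z j0) _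
        (hZm j0) (Finset.measurable_sum _ (fun i _ => hZm i)) hV hVi hV0
      have hTsum : ∀ ω, Z j0 ω + ∑ i ∈ Finset.univ.erase j0, Z i ω = T ω := fun ω =>
        Finset.add_sum_erase Finset.univ (fun i => Z i ω) (Finset.mem_univ j0)
      have hconv : ∫⁻ ω, ENNReal.ofReal (‖Z j0 ω +
          ∑ i ∈ Finset.univ.erase j0, Z i ω‖ ^ p) ∂μ = A := by
        rw [hA]; exact lintegral_congr fun ω => by rw [hTsum ω]
      rw [hconv, hMi j0, hMtop] at hjf
      exact top_le_iff.mp hjf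
    -- both Bochner integrals vanish
    have hnotint_f : ¬ Integrable (fun ω => ‖mv - (n : ℝ)⁻¹ • ∑ i, X i ω‖ ^ p) μ := by
      intro hcon
      have := hcon.lintegral_lt_top
      rw [hlhs_lint, hAtop, ENNReal.mul_top (by
        simp only [ne_eq, ENNReal.ofReal_eq_zero, not_le]
        positivity)] at this
      exact (lt_irrefl _ this)
    have hnotint_g : ¬ Integrable (fun ω => ‖X j0 ω - mv‖ ^ p) μ := by
      intro hcon
      have := hcon.lintegral_lt_top
      rw [← hM] at this
      rw [hMtop] at this
      exact (lt_irrefl _ this)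
    rw [integral_undef hnotint_f, integral_undef hnotint_g,
      Real.zero_rpow (inv_ne_zero hpne), mul_zero]
  -- main case: finite p-th moment
  · have hq0 : (0:ℝ) < p / 2 := by linarith
    have hr0 : (0:ℝ) < 2 / p := by positivity
    have hrq : (2 / p) * (p / 2) = 1 := by field_simp
    set B : ℝ≥0∞ := 2 * ENNReal.ofReal (p - 1) * (n:ℝ≥0∞) with hB
    have hmain2 : A ≤ B ^ (p / 2) * M := by
      have h1 := ENNReal.rpow_le_rpow hmain hq0.le
      rw [← ENNReal.rpow_mul, hrq, ENNReal.rpow_one] at h1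
      refine h1.trans (le_of_eq ?_)
      calc ((n:ℝ≥0∞) * (2 * ENNReal.ofReal (p-1) * M ^ (2/p))) ^ (p/2)
          = (n:ℝ≥0∞)^(p/2) * ((2 * ENNReal.ofReal (p-1))^(p/2) * (M^(2/p))^(p/2)) := by
            rw [ENNReal.mul_rpow_of_nonneg _ _ hq0.le, ENNReal.mul_rpow_of_nonneg _ _ hq0.le]
      _ = (n:ℝ≥0∞)^(p/2) * ((2 * ENNReal.ofReal (p-1))^(p/2) * M) := by
            rw [← ENNReal.rpow_mul, hrq, ENNReal.rpow_one]
      _ = B ^ (p/2) * M := by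
            rw [hB, ENNReal.mul_rpow_of_nonneg (2 * ENNReal.ofReal (p-1)) (n:ℝ≥0∞) hq0.le]
            exact (mul_left_comm _ _ _).trans (mul_assoc _ _ _).symm
    have hBfin : B ^ (p / 2) ≠ ⊤ := by
      refine ENNReal.rpow_ne_top_of_nonneg hq0.le ?_
      rw [hB]
      exact ENNReal.mul_ne_top (ENNReal.mul_ne_top (by norm_num) ENNReal.ofReal_ne_top)
        (ENNReal.natCast_ne_top n)
    have hAfin : A ≠ ⊤ := by
      intro hcon
      rw [hcon] at hmain2
      exact hMtop (by
        by_contra hM0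
        exact (ENNReal.mul_ne_top hBfin hM0) (top_le_iff.mp hmain2))
    -- integrability of both integrands
    have hint_g : Integrable (fun ω => ‖X j0 ω - mv‖ ^ p) μ := by
      refine ⟨hgmeas.aestronglyMeasurable, ?_⟩
      rw [hasFiniteIntegral_iff_ofReal (Filter.Eventually.of_forall
        (fun ω => by positivity))]
      exact Ne.lt_top (by rw [← hM]; exact hMtop)
    have hint_f : Integrable (fun ω => ‖mv - (n : ℝ)⁻¹ • ∑ i, X i ω‖ ^ p) μ := by
      refine ⟨hfmeas.aestronglyMeasurable, ?_⟩
      rw [hasFiniteIntegral_iff_ofReal (Filter.Eventually.of_forall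
        (fun ω => by positivity))]
      rw [hlhs_lint]
      exact Ne.lt_top (ENNReal.mul_ne_top ENNReal.ofReal_ne_top hAfin)
    -- convert to lintegrals
    have hlhs : ∫ ω, ‖mv - (n : ℝ)⁻¹ • ∑ i, X i ω‖ ^ p ∂μ =
        (ENNReal.ofReal (((n:ℝ)⁻¹) ^ p) * A).toReal := by
      rw [integral_eq_lintegral_of_nonneg_ae (Filter.Eventually.of_forall
        (fun ω => by positivity)) hfmeas.aestronglyMeasurable, hlhs_lint]
    have hrhs : ∫ ω, ‖X j0 ω - mv‖ ^ p ∂μ = M.toReal := by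
      rw [integral_eq_lintegral_of_nonneg_ae (Filter.Eventually.of_forall
        (fun ω => by positivity)) hgmeas.aestronglyMeasurable, hM]
    rw [hlhs, hrhs]
    -- now pure real arithmetic
    set Ar : ℝ := A.toReal with hAr
    set Mr : ℝ := M.toReal with hMr
    have hMr0 : 0 ≤ Mr := ENNReal.toReal_nonneg
    have hAr0 : 0 ≤ Ar := ENNReal.toReal_nonneg
    have hArle : Ar ≤ (2 * (p - 1) * n) ^ (p / 2) * Mr := by
      have := ENNReal.toReal_mono (ENNReal.mul_ne_top hBfin hMtop) hmain2
      rw [ENNReal.toReal_mul] at this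
      rw [hAr, hMr]
      refine this.trans (le_of_eq ?_)
      congr 1
      rw [← ENNReal.toReal_rpow]
      congr 1
      rw [hB, ENNReal.toReal_mul, ENNReal.toReal_mul, ENNReal.toReal_ofReal hβ0]
      simp
    have htoR : (ENNReal.ofReal (((n:ℝ)⁻¹) ^ p) * A).toReal = ((n:ℝ)⁻¹) ^ p * Ar := by
      rw [ENNReal.toReal_mul, ENNReal.toReal_ofReal (by positivity)]
    rw [htoR]
    -- (( n⁻¹ )^p * Ar)^(1/p) ≤ 2 √((p-1)/n) Mr^(1/p)
    have hstep1 : (((n:ℝ)⁻¹) ^ p * Ar) ^ p⁻¹ = (n:ℝ)⁻¹ * Ar ^ p⁻¹ := by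
      rw [Real.mul_rpow (by positivity) hAr0, ← Real.rpow_mul hinv0.le,
        mul_inv_cancel₀ hpne, Real.rpow_one]
    have hstep2 : Ar ^ p⁻¹ ≤ ((2 * (p - 1) * n) ^ (p / 2) * Mr) ^ p⁻¹ :=
      Real.rpow_le_rpow hAr0 hArle (by positivity)
    have hstep3 : ((2 * (p - 1) * n) ^ (p / 2) * Mr) ^ p⁻¹ =
        (2 * (p - 1) * n) ^ ((1:ℝ)/2) * Mr ^ p⁻¹ := by
      rw [Real.mul_rpow (by positivity) hMr0, ← Real.rpow_mul (by positivity)]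
      congr 2
      field_simp
    have hcoef : (n:ℝ)⁻¹ * (2 * (p - 1) * n) ^ ((1:ℝ)/2) ≤
        2 * Real.sqrt ((p - 1) / n) := by
      have h2 : (2 * (p - 1) * (n:ℝ)) ^ ((1:ℝ)/2) = Real.sqrt (2 * (p - 1) * n) := by
        rw [Real.sqrt_eq_rpow]
      rw [h2]
      have hinv : (n:ℝ)⁻¹ = Real.sqrt (((n:ℝ)⁻¹) ^ 2) := by
        rw [Real.sqrt_sq hinv0.le]
      rw [hinv, ← Real.sqrt_mul (by positivity)]
      have hcomb : ((n:ℝ)⁻¹) ^ 2 * (2 * (p - 1) * n) = 2 * (p - 1) / n := by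
        field_simp
      rw [hcomb]
      have h4 : 2 * (p - 1) / (n:ℝ) ≤ 4 * ((p - 1) / n) := by
        rw [mul_div_assoc]
        have : (p - 1) / (n:ℝ) ≥ 0 := by positivity
        linarith
      calc Real.sqrt (2 * (p - 1) / n) ≤ Real.sqrt (4 * ((p - 1) / n)) :=
            Real.sqrt_le_sqrt h4
      _ = 2 * Real.sqrt ((p - 1) / n) := by
          rw [Real.sqrt_mul (by norm_num), show Real.sqrt 4 = 2 by
            rw [show (4:ℝ) = 2 ^ 2 by norm_num, Real.sqrt_sq (by norm_num)]]
    calc (((n:ℝ)⁻¹) ^ p * Ar) ^ p⁻¹ = (n:ℝ)⁻¹ * Ar ^ p⁻¹ := hstep1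
    _ ≤ (n:ℝ)⁻¹ * ((2 * (p - 1) * n) ^ (p / 2) * Mr) ^ p⁻¹ := by
        exact mul_le_mul_of_nonneg_left hstep2 hinv0.le
    _ = ((n:ℝ)⁻¹ * (2 * (p - 1) * n) ^ ((1:ℝ)/2)) * Mr ^ p⁻¹ := by
        rw [hstep3]; ring
    _ ≤ (2 * Real.sqrt ((p - 1) / n)) * Mr ^ p⁻¹ := by
        exact mul_le_mul_of_nonneg_right hcoef (by positivity)
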